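/- Let ε > 0 and let {K_a : a ∈ {0,1}^t, t ≥ 0} be a family of pairwise disjoint (at each level) nondegenerate closed subintervals of [0,1], nested so that K_b ⊆ K_a whenever b extends a. Define ℓ_t(ε) = card{a ∈ {0,1}^t : diam(K_a) ≥ ε} and ℓ_∞(ε) = card{α ∈ {0,1}^ℕ : diam(∩_t K_{α[0,t)}) ≥ ε}. Then there exists t₀ such that ℓ_t(ε) = ℓ_∞(ε) for all t ≥ t₀. -/

import Mathlib

open Filter Metric Set
open scoped Classical

namespace RQA

variable {X : Type*} [MetricSpace X]

/-- Correlation sum `C_m(x,n,ε)` with respect to the Bowen metric `ρ_m`: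
`ρ_m(f^[i] x, f^[j] x) ≤ ε ↔ ∀ k < m, dist (f^[i+k] x) (f^[j+k] x) ≤ ε`. -/
noncomputable def corrSum (f : X → X) (x : X) (m n : ℕ) (ε : ℝ) : ℝ :=
  (((Finset.range n ×ˢ Finset.range n).filter
      (fun p => ∀ k < m, dist (f^[p.1 + k] x) (f^[p.2 + k] x) ≤ ε)).card : ℝ) / (n : ℝ) ^ 2

/-- Correlation sum `C_∞(x,n,ε)` with respect to the metric `ρ_∞`. -/
noncomputable def corrSumInf (f : X → X) (x : X) (n : ℕ) (ε : ℝ) : ℝ :=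
  (((Finset.range n ×ˢ Finset.range n).filter
      (fun p => ∀ k : ℕ, dist (f^[p.1 + k] x) (f^[p.2 + k] x) ≤ ε)).card : ℝ) / (n : ℝ) ^ 2

/-- Lower asymptotic correlation sum `C̲_m(x,ε)`. -/
noncomputable def lowerCorr (f : X → X) (x : X) (m : ℕ) (ε : ℝ) : ℝ :=
  liminf (fun n => corrSum f x m n ε) atTop

/-- Upper asymptotic correlation sum `C̄_m(x,ε)`. -/
noncomputable def upperCorr (f : X → X) (x : X) (m : ℕ) (ε : ℝ) : ℝ :=
  limsup (fun n => corrSum f x m n ε) atTop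

/-- Recurrence `m`-determinism `DET_m(x,n,ε) = C_m(x,n,ε)/C_1(x,n,ε)`. -/
noncomputable def detSum (f : X → X) (x : X) (m n : ℕ) (ε : ℝ) : ℝ :=
  corrSum f x m n ε / corrSum f x 1 n ε

/-- Recurrence `∞`-determinism `DET_∞(x,n,ε) = C_∞(x,n,ε)/C_1(x,n,ε)`. -/
noncomputable def detSumInf (f : X → X) (x : X) (n : ℕ) (ε : ℝ) : ℝ :=
  corrSumInf f x n ε / corrSum f x 1 n ε

/-- Lower asymptotic recurrence determinism `DET̲_m(x,ε)`. -/
noncomputable def lowerDet (f : X → X) (x : X) (m : ℕ) (ε : ℝ) : ℝ :=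
  liminf (fun n => detSum f x m n ε) atTop

/-- Upper asymptotic recurrence determinism `DET̄_m(x,ε)`. -/
noncomputable def upperDet (f : X → X) (x : X) (m : ℕ) (ε : ℝ) : ℝ :=
  limsup (fun n => detSum f x m n ε) atTop

/-- `C̄_∞(x,ε) = lim_m C̄_m(x,ε)`; since `m ↦ C̄_m(x,ε)` is non-increasing,
the limit equals the infimum over `m ≥ 1`. -/
noncomputable def upperCorrInf (f : X → X) (x : X) (ε : ℝ) : ℝ :=
  ⨅ m : ℕ, upperCorr f x (m + 1) ε

/-- `C̲_∞(x,ε) = lim_m C̲_m(x,ε)` (a limit of a non-increasing sequence). -/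
noncomputable def lowerCorrInf (f : X → X) (x : X) (ε : ℝ) : ℝ :=
  ⨅ m : ℕ, lowerCorr f x (m + 1) ε

/-- `DET̄_∞(x,ε) = lim_m DET̄_m(x,ε)` (a limit of a non-increasing sequence). -/
noncomputable def upperDetInf (f : X → X) (x : X) (ε : ℝ) : ℝ :=
  ⨅ m : ℕ, upperDet f x (m + 1) ε

/-- `DET̲_∞(x,ε) = lim_m DET̲_m(x,ε)` (a limit of a non-increasing sequence). -/
noncomputable def lowerDetInf (f : X → X) (x : X) (ε : ℝ) : ℝ :=
  ⨅ m : ℕ, lowerDet f x (m + 1) ε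

/-- The ω-limit set of `x`: the set of limit points of the trajectory `(f^[n] x)`. -/
def omegaSet (f : X → X) (x : X) : Set X :=
  {y | ∃ φ : ℕ → ℕ, StrictMono φ ∧ Tendsto (fun n => f^[φ n] x) atTop (nhds y)}

/-- Distance between two subsets of `ℝ`. -/
noncomputable def setDist (A B : Set ℝ) : ℝ :=
  sInf {d | ∃ a ∈ A, ∃ b ∈ B, d = dist a b}

/-- The binary word of length `t` given by the binary digits of `n`
(the 2-adic encoding, least significant digit first; addition of integers to
words is addition with carry from left to right, i.e. ordinary addition of the
encoded values modulo `2^t`). -/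
def word (t n : ℕ) : Fin t → Bool := fun i => n.testBit i.val

/-- The value `∑ w_i 2^i` of a binary word under the 2-adic encoding. -/
def encodeWord {t : ℕ} (w : Fin t → Bool) : ℕ :=
  ∑ i : Fin t, if w i then 2 ^ i.val else 0

end RQA

open RQA

section Aux

open MeasureTheory

/-- The finset of `ε`-heavy words at level `t`. -/
noncomputable def Hfin (ε : ℝ) (K : ∀ t : ℕ, (Fin t → Bool) → Set ℝ) (t : ℕ) :
    Finset (Fin t → Bool) :=
  Finset.univ.filter fun a => ε ≤ Metric.diam (K t a)

/-- The limit set of a branch. -/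
def limSet (K : ∀ t : ℕ, (Fin t → Bool) → Set ℝ) (α : ℕ → Bool) : Set ℝ :=
  ⋂ t : ℕ, K t (fun i : Fin t => α i.val)

/-- The set of `ε`-heavy branches. -/
def Aset (ε : ℝ) (K : ∀ t : ℕ, (Fin t → Bool) → Set ℝ) : Set (ℕ → Bool) :=
  {α | ε ≤ Metric.diam (limSet K α)}

/-- Union of heavy intervals at level `t`. -/
def Uset (ε : ℝ) (K : ∀ t : ℕ, (Fin t → Bool) → Set ℝ) (t : ℕ) : Set ℝ :=
  ⋃ a ∈ Hfin ε K t, K t a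

end Aux

/-- `ℓ_t(ε)` is eventually constant, equal to `ℓ_∞(ε)`. -/
theorem stmt_10 (ε : ℝ) (hε : 0 < ε) (K : ∀ t : ℕ, (Fin t → Bool) → Set ℝ)
    (hK : ∀ t (a : Fin t → Bool), ∃ y z : ℝ, y < z ∧ 0 ≤ y ∧ z ≤ 1 ∧ K t a = Icc y z)
    (hnest : ∀ (s t : ℕ) (hst : s ≤ t) (b : Fin t → Bool),
      K t b ⊆ K s (fun i => b (Fin.castLE hst i)))
    (hdisj : ∀ t (a b : Fin t → Bool), a ≠ b → Disjoint (K t a) (K t b)) :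
    ∃ t₀ : ℕ, ∀ t ≥ t₀,
      {a : Fin t → Bool | ε ≤ Metric.diam (K t a)}.ncard
        = {α : ℕ → Bool |
            ε ≤ Metric.diam (⋂ t' : ℕ, K t' (fun i : Fin t' => α i.val))}.ncard := by
  classical
  -- Basic facts about the intervals
  have hbd : ∀ t (a : Fin t → Bool), Bornology.IsBounded (K t a) := by
    intro t a; obtain ⟨y, z, _, _, _, hEq⟩ := hK t a; rw [hEq]
    exact Metric.isBounded_Icc y z
  have hsub01 : ∀ t (a : Fin t → Bool), K t a ⊆ Icc (0:ℝ) 1 := by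
    intro t a; obtain ⟨y, z, hyz, hy, hz, hEq⟩ := hK t a; rw [hEq]
    exact Icc_subset_Icc hy hz
  have hmeas : ∀ t (a : Fin t → Bool), MeasurableSet (K t a) := by
    intro t a; obtain ⟨y, z, _, _, _, hEq⟩ := hK t a; rw [hEq]; exact measurableSet_Icc
  have hvol : ∀ t (a : Fin t → Bool),
      MeasureTheory.volume (K t a) = ENNReal.ofReal (Metric.diam (K t a)) := by
    intro t a; obtain ⟨y, z, hyz, _, _, hEq⟩ := hK t a
    rw [hEq, Real.volume_Icc, Real.diam_Icc hyz.le]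
  have hHmem : ∀ t (a : Fin t → Bool), a ∈ Hfin ε K t ↔ ε ≤ Metric.diam (K t a) := by
    intro t a; simp [Hfin]
  -- heaviness passes to prefixes
  have hres : ∀ (s t : ℕ) (hst : s ≤ t) (b : Fin t → Bool),
      ε ≤ Metric.diam (K t b) → ε ≤ Metric.diam (K s (fun i => b (Fin.castLE hst i))) :=
    fun s t hst b hb => hb.trans (Metric.diam_mono (hnest s t hst b) (hbd s _))
  have hlim_sub : ∀ (α : ℕ → Bool) (t : ℕ),
      limSet K α ⊆ K t (fun i : Fin t => α i.val) := fun α t => Set.iInter_subset _ t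
  have hApre : ∀ α ∈ Aset ε K, ∀ t, (fun i : Fin t => α i.val) ∈ Hfin ε K t := by
    intro α hα t
    rw [hHmem]
    exact le_trans hα (Metric.diam_mono (hlim_sub α t) (hbd t _))
  -- branch whose every prefix is heavy is a heavy branch
  have hC2 : ∀ α : ℕ → Bool,
      (∀ t, ε ≤ Metric.diam (K t (fun i : Fin t => α i.val))) → α ∈ Aset ε K := by
    intro α hall
    choose y z hyz hy0 hz1 hKeq using fun t => hK t (fun i : Fin t => α i.val)
    have hmono : ∀ s t, s ≤ t → y s ≤ y t ∧ z t ≤ z s := by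
      intro s t hst
      have h1 : K t (fun i : Fin t => α i.val) ⊆ K s (fun i : Fin s => α i.val) :=
        hnest s t hst (fun i : Fin t => α i.val)
      rw [hKeq, hKeq] at h1
      exact (Set.Icc_subset_Icc_iff (hyz t).le).mp h1
    have hyle : ∀ s t, y s ≤ z t := by
      intro s t
      rcases le_total s t with h | h
      · exact le_trans (hmono s t h).1 (hyz t).le
      · exact le_trans (hyz s).le (hmono t s h).2
    have hbddy : BddAbove (Set.range y) := ⟨z 0, by rintro _ ⟨t, rfl⟩; exact hyle t 0⟩
    have hbddz : BddBelow (Set.range z) := ⟨y 0, by rintro _ ⟨t, rfl⟩; exact hyle 0 t⟩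
    set Y := ⨆ t, y t with hYdef
    set Z := ⨅ t, z t with hZdef
    have hdiam : ∀ t, ε ≤ z t - y t := by
      intro t
      have := hall t
      rwa [hKeq, Real.diam_Icc (hyz t).le] at this
    have hYZ : Y + ε ≤ Z := by
      refine le_ciInf fun t => ?_
      have h2 : ∀ s, y s ≤ z t - ε := by
        intro s
        have hm1 : y s ≤ y (max s t) := (hmono s _ (le_max_left s t)).1
        have hm2 : z (max s t) ≤ z t := (hmono t _ (le_max_right s t)).2
        have h3 := hdiam (max s t)
        linarith
      have : Y ≤ z t - ε := ciSup_le h2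
      linarith
    have hIcc : limSet K α = Icc Y Z := by
      unfold limSet
      ext x
      simp only [Set.mem_iInter, hKeq, Set.mem_Icc]
      constructor
      · intro h
        exact ⟨ciSup_le fun t => (h t).1, le_ciInf fun t => (h t).2⟩
      · intro h t
        exact ⟨le_trans (le_ciSup hbddy t) h.1, le_trans h.2 (ciInf_le hbddz t)⟩
    show ε ≤ Metric.diam (limSet K α)
    rw [hIcc, Real.diam_Icc (by linarith : Y ≤ Z)]
    linarith
  -- measure of the union of heavy intervals
  have hU : ∀ t, MeasureTheory.volume (Uset ε K t) =
      ∑ a ∈ Hfin ε K t, MeasureTheory.volume (K t a) := by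
    intro t
    exact MeasureTheory.measure_biUnion_finset
      (fun a _ b _ hab => hdisj t a b hab) (fun a _ => hmeas t a)
  have hUsub : ∀ t, Uset ε K t ⊆ Icc (0:ℝ) 1 := by
    intro t x hx
    simp only [Uset, Set.mem_iUnion] at hx
    obtain ⟨a, _, hx⟩ := hx
    exact hsub01 t a hx
  have hU1 : ∀ t, MeasureTheory.volume (Uset ε K t) ≤ 1 := by
    intro t
    calc MeasureTheory.volume (Uset ε K t) ≤ MeasureTheory.volume (Icc (0:ℝ) 1) :=
          MeasureTheory.measure_mono (hUsub t)
      _ = 1 := by simp [Real.volume_Icc]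
  have hUanti : Antitone (Uset ε K) := by
    intro s t hst x hx
    simp only [Uset, Set.mem_iUnion] at hx ⊢
    obtain ⟨b, hb, hx⟩ := hx
    refine ⟨fun i => b (Fin.castLE hst i), ?_, hnest s t hst b hx⟩
    rw [hHmem]
    exact hres s t hst b ((hHmem t b).mp hb)
  have hUmeas : ∀ t, MeasurableSet (Uset ε K t) := fun t =>
    Finset.measurableSet_biUnion _ (fun a _ => hmeas t a)
  have htend : Tendsto (fun t => MeasureTheory.volume (Uset ε K t)) atTop
      (nhds (MeasureTheory.volume (⋂ t, Uset ε K t))) := by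
    have := MeasureTheory.tendsto_measure_iInter_atTop
      (μ := MeasureTheory.volume) (s := Uset ε K)
      (fun t => (hUmeas t).nullMeasurableSet) hUanti
      ⟨0, ne_top_of_le_ne_top ENNReal.one_ne_top (hU1 0)⟩
    exact this
  -- every point of the intersection lies on a heavy branch
  have hchain : (⋂ t, Uset ε K t) ⊆ ⋃ α ∈ Aset ε K, limSet K α := by
    intro x hx
    simp only [Set.mem_iInter] at hx
    have hx' : ∀ t, ∃ a, a ∈ Hfin ε K t ∧ x ∈ K t a := by
      intro t
      have := hx t
      simpa [Uset, Set.mem_iUnion] using this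
    choose a ha hxa using hx'
    have huniq : ∀ t (b : Fin t → Bool), x ∈ K t b → b = a t := by
      intro t b hb
      by_contra hne
      exact (hdisj t b (a t) hne).ne_of_mem hb (hxa t) rfl
    set α : ℕ → Bool := fun n => a (n+1) ⟨n, Nat.lt_succ_self n⟩ with hαdef
    have hpre : ∀ t, (fun i : Fin t => α i.val) = a t := by
      intro t
      funext i
      have hle : i.val + 1 ≤ t := i.isLt
      have h1 : x ∈ K (i.val+1) (fun j => a t (Fin.castLE hle j)) :=
        hnest _ t hle (a t) (hxa t)
      have h2 := huniq _ _ h1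
      have h3 := congrFun h2 ⟨i.val, Nat.lt_succ_self _⟩
      simp only [hαdef]
      rw [← h3]
      exact congrArg (a t) (Fin.ext rfl)
    have hαA : α ∈ Aset ε K := by
      apply hC2
      intro t
      rw [hpre t]
      exact (hHmem t (a t)).mp (ha t)
    refine Set.mem_biUnion hαA ?_
    simp only [limSet, Set.mem_iInter]
    intro t
    rw [hpre t]; exact hxa t
  -- card bound for heavy words
  have hsum1 : ∀ t, ∑ a ∈ Hfin ε K t, Metric.diam (K t a) ≤ 1 := by
    intro t
    have h1 : ENNReal.ofReal (∑ a ∈ Hfin ε K t, Metric.diam (K t a)) ≤ 1 := by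
      rw [ENNReal.ofReal_sum_of_nonneg (fun a _ => Metric.diam_nonneg)]
      calc ∑ a ∈ Hfin ε K t, ENNReal.ofReal (Metric.diam (K t a))
          = ∑ a ∈ Hfin ε K t, MeasureTheory.volume (K t a) :=
            Finset.sum_congr rfl fun a _ => (hvol t a).symm
        _ = MeasureTheory.volume (Uset ε K t) := (hU t).symm
        _ ≤ 1 := hU1 t
    exact ENNReal.ofReal_le_one.mp h1
  have hcardH : ∀ t, ((Hfin ε K t).card : ℝ) * ε ≤ 1 := by
    intro t
    calc ((Hfin ε K t).card : ℝ) * ε = ∑ _a ∈ Hfin ε K t, ε := by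
          rw [Finset.sum_const, nsmul_eq_mul]
      _ ≤ ∑ a ∈ Hfin ε K t, Metric.diam (K t a) :=
          Finset.sum_le_sum fun a ha => (hHmem t a).mp ha
      _ ≤ 1 := hsum1 t
  -- separation of finitely many branches
  have hsep : ∀ S : Finset (ℕ → Bool), ∃ t₁, ∀ t, t₁ ≤ t → ∀ α ∈ S, ∀ β ∈ S, α ≠ β →
      (fun i : Fin t => α i.val) ≠ (fun i : Fin t => β i.val) := by
    intro S
    have hdp : ∀ α β : ℕ → Bool, ∃ n, α ≠ β → α n ≠ β n := by
      intro α β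
      by_cases h : α = β
      · exact ⟨0, fun h' => absurd h h'⟩
      · obtain ⟨n, hn⟩ := Function.ne_iff.mp h
        exact ⟨n, fun _ => hn⟩
    choose d hd using hdp
    refine ⟨S.sup (fun α => S.sup (fun β => d α β + 1)), ?_⟩
    intro t ht α hα β hβ hne hcon
    have hdn : α (d α β) ≠ β (d α β) := hd α β hne
    have hlt : d α β < t := by
      have h1 : d α β + 1 ≤ S.sup (fun α => S.sup (fun β => d α β + 1)) :=
        le_trans (Finset.le_sup (f := fun β => d α β + 1) hβ)
          (Finset.le_sup (f := fun α => S.sup fun β => d α β + 1) hα)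
      omega
    exact hdn (congrFun hcon ⟨d α β, hlt⟩)
  -- the set of heavy branches is finite
  have hAfin : (Aset ε K).Finite := by
    by_contra hinf
    obtain ⟨S, hSsub, hScard⟩ :=
      (show (Aset ε K).Infinite from hinf).exists_subset_card_eq (Nat.ceil (1/ε) + 1)
    obtain ⟨t₁, hsepS⟩ := hsep S
    have hcardle : S.card ≤ (Hfin ε K t₁).card := by
      refine Finset.card_le_card_of_injOn (fun α => fun i : Fin t₁ => α i.val)
        (fun α hα => hApre α (hSsub hα) t₁) ?_
      intro α hα β hβ h
      by_contra hne
      exact hsepS t₁ le_rfl α hα β hβ hne h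
    have h2 : ((Nat.ceil (1/ε) + 1 : ℕ) : ℝ) ≤ ((Hfin ε K t₁).card : ℝ) := by
      exact_mod_cast hScard ▸ hcardle
    have h3 : (1/ε : ℝ) ≤ Nat.ceil (1/ε) := Nat.le_ceil _
    have h4 : (1/ε : ℝ) * ε = 1 := by field_simp
    have h5 : (1/ε : ℝ) < ((Hfin ε K t₁).card : ℝ) := by
      push_cast at h2; linarith
    have h6 : (1:ℝ) < ((Hfin ε K t₁).card : ℝ) * ε := by
      calc (1:ℝ) = (1/ε) * ε := h4.symm
        _ < _ := mul_lt_mul_of_pos_right h5 hε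
    linarith [hcardH t₁]
  -- eventual bound on the measure
  have hμI : MeasureTheory.volume (⋂ t, Uset ε K t) ≠ ⊤ := by
    refine ne_top_of_le_ne_top ENNReal.one_ne_top ?_
    exact le_trans (MeasureTheory.measure_mono (Set.iInter_subset _ 0)) (hU1 0)
  have hlt : MeasureTheory.volume (⋂ t, Uset ε K t) <
      MeasureTheory.volume (⋂ t, Uset ε K t) + ENNReal.ofReal ε :=
    ENNReal.lt_add_right hμI (by simp [hε, ENNReal.ofReal_eq_zero, not_le])
  have hev := htend.eventually_lt_const hlt
  obtain ⟨t₂, ht₂⟩ := eventually_atTop.mp hev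
  obtain ⟨t₁, hsepA⟩ := hsep hAfin.toFinset
  refine ⟨max t₁ t₂, ?_⟩
  intro t ht
  have htt1 : t₁ ≤ t := le_trans (le_max_left _ _) ht
  have htt2 : t₂ ≤ t := le_trans (le_max_right _ _) ht
  -- every heavy word at level t is a prefix of a heavy branch
  have hsurj : ∀ a ∈ Hfin ε K t, ∃ α ∈ Aset ε K, (fun i : Fin t => α i.val) = a := by
    intro a ha
    by_contra hno
    push_neg at hno
    set G := ⋃ α ∈ hAfin.toFinset, K t (fun i : Fin t => α i.val) with hG
    have hGmeas : MeasurableSet G :=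
      Finset.measurableSet_biUnion _ (fun α _ => hmeas t _)
    have hIG : (⋂ s, Uset ε K s) ⊆ G := by
      refine Set.Subset.trans hchain ?_
      intro x hx
      simp only [Set.mem_iUnion] at hx
      obtain ⟨α, hαA, hx⟩ := hx
      exact Set.mem_biUnion (hAfin.mem_toFinset.mpr hαA) (hlim_sub α t hx)
    have hdisjG : Disjoint (K t a) G := by
      rw [hG]
      simp only [Set.disjoint_iUnion_right]
      intro α hα
      exact hdisj t a _ (fun h => hno α (hAfin.mem_toFinset.mp hα) h.symm)
    have hKaU : K t a ⊆ Uset ε K t := Set.subset_biUnion_of_mem ha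
    have hGU : G ⊆ Uset ε K t := by
      intro x hx
      simp only [hG, Set.mem_iUnion] at hx
      obtain ⟨α, hα, hx⟩ := hx
      exact Set.mem_biUnion (hApre α (hAfin.mem_toFinset.mp hα) t) hx
    have hadd : MeasureTheory.volume G + MeasureTheory.volume (K t a) ≤
        MeasureTheory.volume (Uset ε K t) := by
      rw [← MeasureTheory.measure_union hdisjG.symm (hmeas t a)]
      exact MeasureTheory.measure_mono (Set.union_subset hGU hKaU)
    have h1 : MeasureTheory.volume (⋂ s, Uset ε K s) + ENNReal.ofReal ε ≤
        MeasureTheory.volume (Uset ε K t) := by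
      refine le_trans (add_le_add (MeasureTheory.measure_mono hIG) ?_) hadd
      rw [hvol t a]
      exact ENNReal.ofReal_le_ofReal ((hHmem t a).mp ha)
    exact absurd (ht₂ t htt2) (not_lt.mpr h1)
  -- conclude via a bijection
  have hset1 : {a : Fin t → Bool | ε ≤ Metric.diam (K t a)} = ↑(Hfin ε K t) := by
    ext a; simp [Hfin]
  have hset2 : {α : ℕ → Bool |
      ε ≤ Metric.diam (⋂ t' : ℕ, K t' (fun i : Fin t' => α i.val))} = Aset ε K := rfl
  rw [hset1, hset2, Set.ncard_coe_finset, ← hAfin.coe_toFinset, Set.ncard_coe_finset]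
  refine (Finset.card_bij (fun α _ => fun i : Fin t => α i.val) ?_ ?_ ?_).symm
  · intro α hα
    exact hApre α (hAfin.mem_toFinset.mp hα) t
  · intro α hα β hβ h
    by_contra hne
    exact hsepA t htt1 α hα β hβ hne h
  · intro b hb
    obtain ⟨α, hαA, hαb⟩ := hsurj b hb
    exact ⟨α, hAfin.mem_toFinset.mpr hαA, hαb⟩
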